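/- Let w be Mallows distributed on S_n with parameter q > 0 and n >= 2. Then E[des(w) + des(w^{-1})] = 2q(n-1)/(1+q). -/

import Mathlib

/-- Number of inversions of a permutation of `Fin n`. -/
def invCount (n : ℕ) (w : Equiv.Perm (Fin n)) : ℕ :=
  (Finset.univ.filter (fun p : Fin n × Fin n => p.1 < p.2 ∧ w p.2 < w p.1)).card

/-- The q-factorial `[m]_q! = ∏_{i=1}^m (1 + q + ⋯ + q^{i-1})`. -/
noncomputable def qFactorial (q : ℝ) (m : ℕ) : ℝ :=
  ∏ i ∈ Finset.Icc 1 m, (∑ j ∈ Finset.range i, q ^ j)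

/-- The Mallows probability of `w`: `q^{l(w)} / [n]_q!`. -/
noncomputable def mallows (q : ℝ) (n : ℕ) (w : Equiv.Perm (Fin n)) : ℝ :=
  q ^ invCount n w / qFactorial q n

/-- Number of descents of a permutation of `Fin n`: positions `i` (0-based) with a
successor `j = i+1` such that `w j < w i`. -/
def desCount (n : ℕ) (w : Equiv.Perm (Fin n)) : ℕ :=
  (Finset.univ.filter
    (fun p : Fin n × Fin n => (p.2 : ℕ) = (p.1 : ℕ) + 1 ∧ w p.2 < w p.1)).card

open Finset Equiv

lemma invCount_inv (n : ℕ) (w : Equiv.Perm (Fin n)) : invCount n w⁻¹ = invCount n w := by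
  unfold invCount
  refine Finset.card_nbij' (fun p => (w⁻¹ p.2, w⁻¹ p.1)) (fun p => (w p.2, w p.1)) ?_ ?_ ?_ ?_
  · rintro ⟨a, b⟩ hp
    simp only [Finset.mem_coe, mem_filter, mem_univ, true_and] at hp ⊢
    exact ⟨hp.2, by simpa using hp.1⟩
  · rintro ⟨a, b⟩ hp
    simp only [Finset.mem_coe, mem_filter, mem_univ, true_and] at hp ⊢
    exact ⟨hp.2, by simpa using hp.1⟩
  · rintro ⟨a, b⟩ _; simp
  · rintro ⟨a, b⟩ _; simp

lemma card_filter_val_lt (n k : ℕ) (hk : k ≤ n) :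
    ((Finset.univ : Finset (Fin n)).filter (fun m : Fin n => (m : ℕ) < k)).card = k := by
  rcases Nat.eq_zero_or_pos n with rfl | hn
  · interval_cases k
    simp
  have h : ((Finset.univ : Finset (Fin n)).filter (fun m : Fin n => (m : ℕ) < k)).card
      = (Finset.range k).card := by
    refine Finset.card_nbij' (fun m : Fin n => (m : ℕ))
      (fun m : ℕ => (⟨m % n, Nat.mod_lt _ hn⟩ : Fin n)) ?_ ?_ ?_ ?_
    · intro a ha; simp only [Finset.mem_coe, mem_filter, mem_univ, true_and] at ha; simpa using ha
    · intro a ha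
      simp only [Finset.mem_coe, Finset.mem_range] at ha
      simp only [Finset.mem_coe, mem_filter, mem_univ, true_and]
      simpa using lt_of_eq_of_lt (Nat.mod_eq_of_lt (by omega)) ha
    · intro a ha; simp only [Finset.mem_coe, mem_filter, mem_univ, true_and] at ha
      exact Fin.ext (by simp [Nat.mod_eq_of_lt a.isLt])
    · intro a ha; simp only [Finset.mem_coe, Finset.mem_range] at ha
      simp [Nat.mod_eq_of_lt (show a < n by omega)]
  simpa using h

/-- the insertion map -/
def insFun (n : ℕ) (k : Fin (n + 1)) (e : Perm (Fin n)) : Fin (n + 1) → Fin (n + 1) :=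
  Fin.cons k (fun i => k.succAbove (e i))

lemma insFun_inj (n : ℕ) (k : Fin (n + 1)) (e : Perm (Fin n)) :
    Function.Injective (insFun n k e) := by
  intro a b hab
  induction a using Fin.cases <;> induction b using Fin.cases <;>
    simp only [insFun, Fin.cons_zero, Fin.cons_succ] at hab
  · rfl
  · exact absurd hab.symm (Fin.succAbove_ne k _)
  · exact absurd hab (Fin.succAbove_ne k _)
  · congr 1
    exact e.injective (Fin.succAbove_right_injective hab)

noncomputable def insPerm (n : ℕ) (k : Fin (n + 1)) (e : Perm (Fin n)) : Perm (Fin (n + 1)) :=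
  Equiv.ofBijective _ (Finite.injective_iff_bijective.mp (insFun_inj n k e))

lemma insPerm_zero (n : ℕ) (k : Fin (n + 1)) (e : Perm (Fin n)) : insPerm n k e 0 = k := rfl
lemma insPerm_succ (n : ℕ) (k : Fin (n + 1)) (e : Perm (Fin n)) (i : Fin n) :
    insPerm n k e i.succ = k.succAbove (e i) := rfl

lemma insPerm_bijective (n : ℕ) :
    Function.Bijective (fun p : Fin (n + 1) × Perm (Fin n) => insPerm n p.1 p.2) := by
  rw [Fintype.bijective_iff_injective_and_card]
  constructor
  · rintro ⟨k, e⟩ ⟨k', e'⟩ h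
    simp only at h
    have h0 : k = k' := by
      have := congrArg (fun w : Perm (Fin (n+1)) => w 0) h
      simpa [insPerm_zero] using this
    have he : e = e' := by
      ext i
      have := congrArg (fun w : Perm (Fin (n+1)) => w i.succ) h
      simp only [insPerm_succ, h0] at this
      exact congrArg Fin.val (Fin.succAbove_right_injective this)
    simp [h0, he]
  · simp [Fintype.card_perm, Nat.factorial_succ]

lemma invCount_insPerm (n : ℕ) (k : Fin (n + 1)) (e : Perm (Fin n)) :
    invCount (n + 1) (insPerm n k e) = (k : ℕ) + invCount n e := by
  unfold invCount
  rw [Finset.card_filter, Finset.card_filter, ← Finset.univ_product_univ, Finset.sum_product]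
  rw [Fin.sum_univ_succ]
  have h1 : ∑ b : Fin (n + 1),
      (if (0 : Fin (n+1)) < b ∧ insPerm n k e b < insPerm n k e 0 then 1 else 0) = (k : ℕ) := by
    rw [Fin.sum_univ_succ]
    simp only [lt_self_iff_false, false_and, if_false, zero_add]
    have : ∀ j : Fin n, ((0 : Fin (n+1)) < j.succ ∧ insPerm n k e j.succ < insPerm n k e 0)
        ↔ ((e j : ℕ) < (k : ℕ)) := by
      intro j
      simp only [insPerm_succ, insPerm_zero, Fin.succ_pos, true_and,
        Fin.succAbove_lt_iff_castSucc_lt]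
      rw [Fin.castSucc_lt_iff_succ_le]
      constructor
      · intro h; have := Fin.le_def.mp h; simp at this; omega
      · intro h; rw [Fin.le_def]; simp; omega
    rw [Finset.sum_congr rfl (fun j _ => by rw [if_congr (this j) rfl rfl])]
    rw [← Finset.card_filter]
    have : ((Finset.univ : Finset (Fin n)).filter (fun j : Fin n => ((e j : ℕ) < (k:ℕ)))).card
        = ((Finset.univ : Finset (Fin n)).filter (fun m : Fin n => ((m : ℕ) < (k:ℕ)))).card := by
      refine Finset.card_nbij' (fun j => e j) (fun m => e⁻¹ m) ?_ ?_ ?_ ?_ <;>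
        intro x hx <;> simp_all [Finset.mem_filter]
    rw [this, card_filter_val_lt _ _ (by omega)]
  rw [h1]
  congr 1
  conv_rhs => rw [← Finset.univ_product_univ, Finset.sum_product]
  refine Finset.sum_congr rfl fun i _ => ?_
  rw [Fin.sum_univ_succ]
  have h2 : ¬ ((i.succ : Fin (n+1)) < 0) := by simp
  simp only [h2, false_and, if_false, zero_add]
  refine Finset.sum_congr rfl fun j _ => ?_
  refine if_congr ?_ rfl rfl
  simp only [insPerm_succ, Fin.succAbove_lt_succAbove_iff, Fin.succ_lt_succ_iff]


lemma sum_pow_invCount (q : ℝ) : ∀ n, ∑ w : Perm (Fin n), q ^ invCount n w = qFactorial q n := by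
  intro n
  induction n with
  | zero =>
    have h : ∀ w : Perm (Fin 0), invCount 0 w = 0 := by
      intro w; simp [invCount]
    rw [Finset.sum_congr rfl (fun w _ => by rw [h w, pow_zero]), Finset.sum_const,
      Finset.card_univ, Fintype.card_perm]
    simp [qFactorial, Finset.Icc_eq_empty (by omega : ¬ (1:ℕ) ≤ 0)]
  | succ n ih =>
    rw [← Fintype.sum_bijective _ (insPerm_bijective n)
      (fun p : Fin (n+1) × Perm (Fin n) => q ^ invCount (n+1) (insPerm n p.1 p.2))
      (fun w => q ^ invCount (n+1) w) (fun p => rfl)]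
    rw [Fintype.sum_prod_type]
    have : ∀ k : Fin (n+1), ∑ e : Perm (Fin n), q ^ invCount (n+1) (insPerm n k e)
        = q ^ (k : ℕ) * qFactorial q n := by
      intro k
      rw [← ih, Finset.mul_sum]
      exact Finset.sum_congr rfl fun e _ => by rw [invCount_insPerm, pow_add]
    rw [Finset.sum_congr rfl (fun k _ => this k), ← Finset.sum_mul,
      Fin.sum_univ_eq_sum_range (fun j => q ^ j) (n+1)]
    unfold qFactorial
    rw [show Finset.Icc 1 (n+1) = insert (n+1) (Finset.Icc 1 n) from
        (by ext m; simp [Finset.mem_Icc]; omega),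
      Finset.prod_insert (by simp)]

lemma swap_mono {n : ℕ} {i j a b : Fin n} (hp : (j : ℕ) = (i : ℕ) + 1)
    (hab : a < b) (hne : ¬(a = i ∧ b = j)) :
    Equiv.swap i j a < Equiv.swap i j b := by
  have hij : i ≠ j := fun h => by simp [h] at hp
  have hfv : ∀ x y : Fin n, x = y ↔ (x : ℕ) = (y : ℕ) := fun x y => Fin.ext_iff
  have hab' : (a : ℕ) < (b : ℕ) := hab
  rw [Fin.lt_def]
  rcases eq_or_ne a i with rfl | hai
  · -- a = i, so b ≠ j
    have hbj : b ≠ j := fun h => hne ⟨rfl, h⟩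
    have hbi : b ≠ a := fun h => by rw [h] at hab; exact lt_irrefl _ hab
    rw [Equiv.swap_apply_left, Equiv.swap_apply_of_ne_of_ne hbi hbj]
    have h1 := (hfv b j).not.mp hbj
    omega
  rcases eq_or_ne a j with rfl | haj
  · have hbi : b ≠ i := fun h => by
      rw [hfv] at h; omega
    have hbj : b ≠ a := fun h => by rw [h] at hab; exact lt_irrefl _ hab
    rw [Equiv.swap_apply_right, Equiv.swap_apply_of_ne_of_ne hbi hbj]
    have h1 := (hfv a i).not.mp hij.symm
    omega
  rcases eq_or_ne b i with rfl | hbi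
  · rw [Equiv.swap_apply_of_ne_of_ne hai haj, Equiv.swap_apply_left]
    omega
  rcases eq_or_ne b j with rfl | hbj
  · rw [Equiv.swap_apply_of_ne_of_ne hai haj, Equiv.swap_apply_right]
    have h1 := (hfv a i).not.mp hai
    omega
  · rw [Equiv.swap_apply_of_ne_of_ne hai haj, Equiv.swap_apply_of_ne_of_ne hbi hbj]
    exact hab'

lemma invCount_mul_swap {n : ℕ} {i j : Fin n} (hp : (j : ℕ) = (i : ℕ) + 1)
    (w : Perm (Fin n)) (hasc : w i < w j) :
    invCount n (w * Equiv.swap i j) = invCount n w + 1 := by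
  set s := Equiv.swap i j with hs
  have hslem : ∀ x : Fin n, s (s x) = x := fun x => Equiv.swap_apply_self i j x
  have hij : i < j := by rw [Fin.lt_def]; omega
  have hmem : ((i, j) : Fin n × Fin n) ∈
      (Finset.univ.filter (fun p : Fin n × Fin n => p.1 < p.2 ∧ (w * s) p.2 < (w * s) p.1)) := by
    simp only [mem_filter, mem_univ, true_and]
    refine ⟨hij, ?_⟩
    simp only [Perm.mul_apply, hs, Equiv.swap_apply_left, Equiv.swap_apply_right]
    exact hasc
  unfold invCount
  rw [← Finset.card_erase_add_one hmem]
  congr 1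
  refine Finset.card_nbij' (fun p => (s p.1, s p.2)) (fun p => (s p.1, s p.2)) ?_ ?_ ?_ ?_
  · rintro ⟨a, b⟩ hp'
    simp only [Finset.mem_coe, Finset.mem_erase, mem_filter, mem_univ, true_and, ne_eq, Prod.mk.injEq] at hp'
    obtain ⟨hne, hab, hinv⟩ := hp'
    simp only [Finset.mem_coe, mem_filter, mem_univ, true_and]
    constructor
    · exact swap_mono hp hab (by tauto)
    · simpa [Perm.mul_apply, hslem] using hinv
  · rintro ⟨a, b⟩ hp'
    simp only [Finset.mem_coe, mem_filter, mem_univ, true_and] at hp'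
    obtain ⟨hab, hinv⟩ := hp'
    have hne : ¬(a = i ∧ b = j) := by
      rintro ⟨rfl, rfl⟩
      exact absurd hasc (not_lt.mpr (le_of_lt hinv))
    simp only [Finset.mem_coe, Finset.mem_erase, mem_filter, mem_univ, true_and, ne_eq, Prod.mk.injEq]
    refine ⟨?_, swap_mono hp hab hne, ?_⟩
    · rintro ⟨h1, h2⟩
      -- s a = i, s b = j means a = s i = j, b = s j = i, contradicting a < b
      have ha : a = j := by rw [← hslem a, h1, hs, Equiv.swap_apply_left]
      have hb : b = i := by rw [← hslem b, h2, hs, Equiv.swap_apply_right]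
      rw [ha, hb] at hab
      exact absurd hab (not_lt.mpr (le_of_lt (by rw [Fin.lt_def]; omega)))
    · simpa [Perm.mul_apply, hslem] using hinv
  · rintro ⟨a, b⟩ _; simp [hslem]
  · rintro ⟨a, b⟩ _; simp [hslem]

lemma sum_desc {n : ℕ} {i j : Fin n} (hp : (j : ℕ) = (i : ℕ) + 1) (q : ℝ) (hq : 0 < q) :
    ∑ w ∈ Finset.univ.filter (fun w : Perm (Fin n) => w j < w i), q ^ invCount n w
      = q / (1 + q) * qFactorial q n := by
  set s := Equiv.swap i j with hs
  have hss : s * s = 1 := Equiv.swap_mul_self i j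
  have hij : i ≠ j := fun h => by simp [h] at hp
  have hkey : ∑ w ∈ Finset.univ.filter (fun w : Perm (Fin n) => w j < w i), q ^ invCount n w
      = ∑ w ∈ Finset.univ.filter (fun w : Perm (Fin n) => w i < w j), q * q ^ invCount n w := by
    refine Finset.sum_nbij' (fun w => w * s) (fun w => w * s) ?_ ?_ ?_ ?_ ?_
    · intro w hw
      simp only [mem_filter, mem_univ, true_and] at hw ⊢
      simpa [Perm.mul_apply, hs, Equiv.swap_apply_left, Equiv.swap_apply_right] using hw
    · intro w hw
      simp only [mem_filter, mem_univ, true_and] at hw ⊢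
      simpa [Perm.mul_apply, hs, Equiv.swap_apply_left, Equiv.swap_apply_right] using hw
    · intro w _; show w * s * s = w; rw [mul_assoc, hss, mul_one]
    · intro w _; show w * s * s = w; rw [mul_assoc, hss, mul_one]
    · intro w hw
      simp only [mem_filter, mem_univ, true_and] at hw
      have hasc : (w * s) i < (w * s) j := by
        simpa [Perm.mul_apply, hs, Equiv.swap_apply_left, Equiv.swap_apply_right] using hw
      have h1 := invCount_mul_swap hp (w * s) hasc
      rw [mul_assoc, hss, mul_one] at h1
      rw [h1, pow_succ]
      ring
  have hsplit := Finset.sum_filter_add_sum_filter_not Finset.univ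
    (fun w : Perm (Fin n) => w j < w i) (fun w => q ^ invCount n w)
  have hnot : Finset.univ.filter (fun w : Perm (Fin n) => ¬ (w j < w i))
      = Finset.univ.filter (fun w : Perm (Fin n) => w i < w j) := by
    apply Finset.filter_congr
    intro w _
    have hne : w i ≠ w j := fun h => hij (w.injective h)
    simp only [not_lt, eq_iff_iff]
    exact ⟨fun h => lt_of_le_of_ne h hne, le_of_lt⟩
  rw [hnot, sum_pow_invCount] at hsplit
  rw [hkey, ← Finset.mul_sum]
  rw [hkey, ← Finset.mul_sum] at hsplit
  have h1q : (1 : ℝ) + q ≠ 0 := by positivity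
  field_simp
  ring_nf
  ring_nf at hsplit
  nlinarith [hsplit]

lemma qFactorial_pos {q : ℝ} (hq : 0 < q) (m : ℕ) : 0 < qFactorial q m := by
  refine Finset.prod_pos fun i hi => ?_
  have : 1 ≤ i := (Finset.mem_Icc.mp hi).1
  exact Finset.sum_pos (fun j _ => pow_pos hq j) (by simp; omega)

def descPairs (n : ℕ) : Finset (Fin n × Fin n) :=
  Finset.univ.filter (fun p : Fin n × Fin n => (p.2 : ℕ) = (p.1 : ℕ) + 1)

lemma desCount_eq (n : ℕ) (w : Equiv.Perm (Fin n)) :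
    desCount n w = ∑ p ∈ descPairs n, if w p.2 < w p.1 then 1 else 0 := by
  unfold desCount descPairs
  rw [← Finset.card_filter, Finset.filter_filter]

lemma card_descPairs (n : ℕ) (hn : 2 ≤ n) : (descPairs n).card = n - 1 := by
  rw [← Finset.card_range (n - 1)]
  refine Finset.card_nbij' (fun p => (p.1 : ℕ))
    (fun m => (⟨m % n, Nat.mod_lt _ (by omega)⟩, ⟨(m + 1) % n, Nat.mod_lt _ (by omega)⟩)) ?_ ?_ ?_ ?_
  · rintro ⟨a, b⟩ hp
    simp only [Finset.mem_coe, descPairs, mem_filter, mem_univ, true_and] at hp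
    simp only [Finset.mem_coe, Finset.mem_range]
    have := b.isLt
    omega
  · intro m hm
    simp only [Finset.mem_coe, Finset.mem_range] at hm
    simp only [Finset.mem_coe, descPairs, mem_filter, mem_univ, true_and]
    simp [Nat.mod_eq_of_lt (show m < n by omega), Nat.mod_eq_of_lt (show m + 1 < n by omega)]
  · rintro ⟨a, b⟩ hp
    simp only [Finset.mem_coe, descPairs, mem_filter, mem_univ, true_and] at hp
    have ha := a.isLt
    have hb := b.isLt
    ext
    · simp [Nat.mod_eq_of_lt ha]
    · simp only []
      rw [Nat.mod_eq_of_lt (by omega)]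
      omega
  · intro m hm
    simp only [Finset.mem_coe, Finset.mem_range] at hm
    simp [Nat.mod_eq_of_lt (show m < n by omega)]

lemma exp_des (n : ℕ) (hn : 2 ≤ n) (q : ℝ) (hq : 0 < q) :
    ∑ w : Equiv.Perm (Fin n), q ^ invCount n w * (desCount n w : ℝ)
      = ((n : ℝ) - 1) * (q / (1 + q) * qFactorial q n) := by
  have step : ∀ w : Equiv.Perm (Fin n), (desCount n w : ℝ)
      = ∑ p ∈ descPairs n, if w p.2 < w p.1 then (1:ℝ) else 0 := by
    intro w
    rw [desCount_eq]
    push_cast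
    exact Finset.sum_congr rfl fun p _ => by split <;> simp
  calc ∑ w : Equiv.Perm (Fin n), q ^ invCount n w * (desCount n w : ℝ)
      = ∑ w : Equiv.Perm (Fin n), ∑ p ∈ descPairs n,
          (if w p.2 < w p.1 then q ^ invCount n w else 0) := by
        refine Finset.sum_congr rfl fun w _ => ?_
        rw [step w, Finset.mul_sum]
        exact Finset.sum_congr rfl fun p _ => by split <;> simp
    _ = ∑ p ∈ descPairs n, ∑ w : Equiv.Perm (Fin n),
          (if w p.2 < w p.1 then q ^ invCount n w else 0) := Finset.sum_comm
    _ = ∑ p ∈ descPairs n, (q / (1 + q) * qFactorial q n) := by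
        refine Finset.sum_congr rfl fun p hp => ?_
        simp only [Finset.mem_coe, descPairs, mem_filter, mem_univ, true_and] at hp
        rw [← Finset.sum_filter]
        exact sum_desc hp q hq
    _ = ((n : ℝ) - 1) * (q / (1 + q) * qFactorial q n) := by
        rw [Finset.sum_const, card_descPairs n hn, nsmul_eq_mul]
        congr 1
        have : (1:ℕ) ≤ n := by omega
        push_cast [Nat.cast_sub this]
        ring

/-- For `w` Mallows distributed on `S_n` with parameter `q > 0` and `n ≥ 2`,
`E[des(w) + des(w⁻¹)] = 2q(n-1)/(1+q)`. -/
theorem stmt_13 (n : ℕ) (hn : 2 ≤ n) (q : ℝ) (hq : 0 < q) :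
    ∑ w : Equiv.Perm (Fin n),
        mallows q n w * ((desCount n w : ℝ) + (desCount n w⁻¹ : ℝ))
      = 2 * q * ((n : ℝ) - 1) / (1 + q) := by
  have hF : 0 < qFactorial q n := qFactorial_pos hq n
  have hmandes : ∀ w : Equiv.Perm (Fin n),
      mallows q n w * ((desCount n w : ℝ) + (desCount n w⁻¹ : ℝ))
        = mallows q n w * (desCount n w : ℝ) + mallows q n w * (desCount n w⁻¹ : ℝ) := by
    intro w; ring
  rw [Finset.sum_congr rfl fun w _ => hmandes w, Finset.sum_add_distrib]
  have hsw : ∑ w : Equiv.Perm (Fin n), mallows q n w * (desCount n w⁻¹ : ℝ)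
      = ∑ w : Equiv.Perm (Fin n), mallows q n w * (desCount n w : ℝ) := by
    refine Fintype.sum_equiv (Equiv.inv (Perm (Fin n))) _ _ fun w => ?_
    simp only [Equiv.inv_apply]
    rw [show mallows q n w = mallows q n w⁻¹ by unfold mallows; rw [invCount_inv]]
  rw [hsw, ← two_mul]
  have : ∑ w : Equiv.Perm (Fin n), mallows q n w * (desCount n w : ℝ)
      = (1 / qFactorial q n) * ∑ w : Equiv.Perm (Fin n), q ^ invCount n w * (desCount n w : ℝ) := by
    rw [Finset.mul_sum]
    exact Finset.sum_congr rfl fun w _ => by unfold mallows; ring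
  rw [this, exp_des n hn q hq]
  have h1q : (1 : ℝ) + q ≠ 0 := by positivity
  field_simp
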